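/- In Der_C(R) for R = C[t,t^{-1},u | u^2 = t^2+4t], with basis elements d_n = t^n u D and d^1_n = t^n D where D = (t+2)\partial_u + u\partial_t, the following commutation relations hold for all integers m, n: [d_m, d_n] = (n-m)(d_{m+n+1} + 4 d_{m+n}); [d^1_m, d^1_n] = (n-m) d_{m+n-1}; and [d_m, d^1_n] = (n-m-1) d^1_{m+n+1} + (4n-4m-2) d^1_{m+n}. -/

import Mathlib

set_option maxHeartbeats 1000000


open Polynomial LaurentPolynomial

/-- The three-point ring `R = ℂ[t,t⁻¹,u | u² = t² + 4t]`. -/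
noncomputable abbrev ThreePointRing : Type :=
  AdjoinRoot (Polynomial.X ^ 2 -
    Polynomial.C (LaurentPolynomial.T 1 ^ 2 + 4 * LaurentPolynomial.T 1) :
      Polynomial (LaurentPolynomial ℂ))

/-- `tⁿ` in the three-point ring. -/
noncomputable def tpow (n : ℤ) : ThreePointRing := AdjoinRoot.of _ (LaurentPolynomial.T n)

/-- `u` in the three-point ring. -/
noncomputable def uR : ThreePointRing := AdjoinRoot.root _

lemma tpow_mul (a b : ℤ) : tpow a * tpow b = tpow (a + b) := by
  unfold tpow; rw [← map_mul, ← LaurentPolynomial.T_add]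

lemma tpow_zero : tpow 0 = 1 := by
  unfold tpow; rw [LaurentPolynomial.T_zero, map_one]

lemma u_sq : uR * uR = tpow 2 + 4 * tpow 1 := by
  have h : (AdjoinRoot.mk _) (Polynomial.X ^ 2 -
      Polynomial.C (LaurentPolynomial.T 1 ^ 2 + 4 * LaurentPolynomial.T 1) :
        Polynomial (LaurentPolynomial ℂ)) = 0 := AdjoinRoot.mk_self
  rw [map_sub, map_pow, AdjoinRoot.mk_X, sub_eq_zero] at h
  have h2 : uR * uR = AdjoinRoot.of _ (LaurentPolynomial.T 1 ^ 2 + 4 * LaurentPolynomial.T 1) := by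
    unfold uR; rw [← sq, h]; rfl
  rw [h2, map_add, map_pow, map_mul, map_ofNat]
  have h3 : tpow 1 ^ 2 = tpow 2 := by rw [sq, tpow_mul]; norm_num
  show tpow 1 ^ 2 + 4 * tpow 1 = tpow 2 + 4 * tpow 1
  rw [h3]

section
variable (D : Derivation ℂ ThreePointRing ThreePointRing)
  (hDt : D (tpow 1) = uR) (hDu : D uR = tpow 1 + 2)

include hDt in
lemma D_tpow : ∀ n : ℤ, D (tpow n) = (n : ℂ) • (tpow (n - 1) * uR) := by
  have key : ∀ n : ℤ, D (tpow n) = (n : ℂ) • (tpow (n - 1) * uR) →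
      D (tpow (n + 1)) = ((n : ℂ) + 1) • (tpow n * uR) := by
    intro n hn
    rw [← tpow_mul, Derivation.leibniz, hDt, hn, smul_eq_mul, smul_eq_mul, mul_smul_comm]
    have h : tpow 1 * (tpow (n - 1) * uR) = tpow n * uR := by
      rw [← mul_assoc, tpow_mul, show 1 + (n - 1) = n from by ring]
    rw [h, add_smul, one_smul, add_comm]
  intro n
  induction n using Int.induction_on with
  | zero => simp [tpow_zero]
  | succ k ih => have := key k ih; push_cast at this ⊢; convert this using 3 <;> push_cast <;> ring
  | pred k ih =>
    push_cast at ih ⊢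
    have h1 : tpow (-(k:ℤ) - 1) * tpow 1 = tpow (-k) := by rw [tpow_mul]; ring_nf
    have h2 := congrArg D h1
    rw [Derivation.leibniz, hDt, ih, smul_eq_mul, smul_eq_mul] at h2
    have h3 : tpow (-1 : ℤ) * tpow 1 = 1 := by rw [tpow_mul]; norm_num [tpow_zero]
    have h5 : tpow 1 * D (tpow (-(k:ℤ) - 1)) =
        (-(k:ℂ)) • (tpow (-(k:ℤ) - 1) * uR) - tpow (-(k:ℤ) - 1) * uR := by
      rw [← h2]; push_cast; ring
    have h4 : D (tpow (-(k:ℤ) - 1)) =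
        tpow (-1) * ((-(k:ℂ)) • (tpow (-(k:ℤ) - 1) * uR) - tpow (-(k:ℤ) - 1) * uR) := by
      rw [← h5, ← mul_assoc, h3, one_mul]
    rw [h4, mul_sub, mul_smul_comm, ← mul_assoc, tpow_mul]
    rw [show (-1 + (-(k:ℤ) - 1)) = -(k:ℤ) - 1 - 1 from by ring]
    module

lemma csmul (c : ℂ) (x : ThreePointRing) : c • x = algebraMap ℂ ThreePointRing c * x :=
  Algebra.smul_def c x

lemma u_sq' : uR * uR = tpow 2 + (4:ℂ) • tpow 1 := by
  rw [u_sq, csmul, map_ofNat]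

lemma tu_t (a b : ℤ) : tpow a * uR * tpow b = tpow (a + b) * uR := by
  rw [mul_right_comm, tpow_mul]

lemma t_tu (a b : ℤ) : tpow a * (tpow b * uR) = tpow (a + b) * uR := by
  rw [← mul_assoc, tpow_mul]

lemma tu_tu (a b : ℤ) : tpow a * uR * (tpow b * uR) =
    tpow (a + b + 2) + (4:ℂ) • tpow (a + b + 1) := by
  rw [mul_mul_mul_comm, tpow_mul, u_sq', mul_add, tpow_mul, mul_smul_comm, tpow_mul]

lemma u_tu (b : ℤ) : uR * (tpow b * uR) = tpow (b + 2) + (4:ℂ) • tpow (b + 1) := by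
  rw [mul_left_comm, ← mul_assoc, mul_assoc, u_sq', mul_add, tpow_mul, mul_smul_comm, tpow_mul]

lemma t_two (a : ℤ) : tpow a * 2 = (2:ℂ) • tpow a := by
  rw [csmul, map_ofNat, mul_comm]

include hDt hDu in
lemma D_tu (n : ℤ) : D (tpow n * uR) =
    ((n:ℂ) + 1) • tpow (n + 1) + (4 * n + 2) • tpow n := by
  rw [Derivation.leibniz, hDu, D_tpow D hDt, smul_eq_mul, smul_eq_mul, mul_smul_comm,
    u_tu, mul_add, tpow_mul, t_two]
  rw [show n - 1 + 2 = n + 1 from by ring, show n - 1 + 1 = n from by ring]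
  module

omit hDt hDu in
lemma brk (f g : ThreePointRing) : ⁅f • D, g • D⁆ = (f * D g - g * D f) • D := by
  ext x
  simp only [Derivation.commutator_apply, Derivation.smul_apply, Derivation.leibniz,
    smul_eq_mul, Derivation.sub_apply]
  ring
end

/-- for the derivation `D = (t+2)∂ᵤ + u∂ₜ` of `R` and the basis
`dₙ = tⁿuD`, `d¹ₙ = tⁿD` of `Der_ℂ(R)`, the commutation relations
`[dₘ,dₙ] = (n-m)(d_{m+n+1} + 4d_{m+n})`, `[d¹ₘ,d¹ₙ] = (n-m)d_{m+n-1}`,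
`[dₘ,d¹ₙ] = (n-m-1)d¹_{m+n+1} + (4n-4m-2)d¹_{m+n}` hold. -/
theorem three_point_witt_relations
    (D : Derivation ℂ ThreePointRing ThreePointRing)
    (hDt : D (tpow 1) = uR) (hDu : D uR = tpow 1 + 2) :
    ∀ m n : ℤ,
      (⁅(tpow m * uR) • D, (tpow n * uR) • D⁆ =
        ((n : ℂ) - m) • ((tpow (m + n + 1) * uR) • D + (4 : ℂ) • ((tpow (m + n) * uR) • D))) ∧
      (⁅tpow m • D, tpow n • D⁆ = ((n : ℂ) - m) • ((tpow (m + n - 1) * uR) • D)) ∧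
      (⁅(tpow m * uR) • D, tpow n • D⁆ =
        ((n : ℂ) - m - 1) • (tpow (m + n + 1) • D) +
          (4 * (n : ℂ) - 4 * m - 2) • (tpow (m + n) • D)) := by
  intro m n
  refine ⟨?_, ?_, ?_⟩
  · rw [brk D, D_tu D hDt hDu n, D_tu D hDt hDu m, ← smul_assoc,
      ← add_smul, ← smul_assoc]
    congr 1
    simp only [mul_add, mul_smul_comm, tu_t]
    rw [show m + (n + 1) = m + n + 1 from by ring, show n + (m + 1) = m + n + 1 from by ring,
      show n + m = m + n from by ring]
    module
  · rw [brk D, D_tpow D hDt n, D_tpow D hDt m, ← smul_assoc]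
    congr 1
    simp only [mul_smul_comm, t_tu]
    rw [show m + (n - 1) = m + n - 1 from by ring, show n + (m - 1) = m + n - 1 from by ring]
    module
  · rw [brk D, D_tpow D hDt n, D_tu D hDt hDu m, ← smul_assoc, ← smul_assoc, ← add_smul]
    congr 1
    simp only [mul_smul_comm, mul_add, tu_tu, tpow_mul]
    rw [show m + (n - 1) + 2 = m + n + 1 from by ring,
      show m + (n - 1) + 1 = m + n from by ring,
      show n + (m + 1) = m + n + 1 from by ring, show n + m = m + n from by ring]
    module
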